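/- arXiv:1610.06432 — 9 statements merged into one kernel-verified Lean document; each statement's English description precedes it below -/
import Mathlib

section
/- There does not exist a (v,m,k,λ)-SEDF with v = mk and k > 1. Equivalently: there are no positive integers m, k, λ, v with v = mk, k > 1, and k²(m−1) = λ(v−1). -/
theorem stmt_1 (m k lam v : ℕ) (hm : 0 < m) (hk : 1 < k) (hlam : 0 < lam)
    (hv : v = m * k) (heq : k ^ 2 * (m - 1) = lam * (v - 1)) : False := by
  subst hv
  have hmk : m < m * k := by nlinarith
  rcases Nat.eq_or_lt_of_le hm with h1 | h1
  · have hm1 : m = 1 := h1.symm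
    subst hm1
    simp at heq
    have : 0 < lam * (k - 1) := Nat.mul_pos hlam (by omega)
    omega
  · have hcop : Nat.Coprime (m * k) (m * k - 1) := by
      have h : m * k = 1 + (m * k - 1) := by omega
      have := (Nat.coprime_add_self_left (m := 1) (n := m * k - 1)).mpr (Nat.coprime_one_left _)
      rwa [← h] at this
    have hkd : k ∣ m * k := Dvd.intro_left m rfl
    have hk2 : Nat.Coprime (k ^ 2) (m * k - 1) :=
      (Nat.Coprime.coprime_dvd_left hkd hcop).pow_left 2
    have hdvd : (m * k - 1) ∣ k ^ 2 * (m - 1) := ⟨lam, by rw [heq]; ring⟩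
    have hdvd2 : (m * k - 1) ∣ (m - 1) :=
      Nat.Coprime.dvd_of_dvd_mul_left hk2.symm hdvd
    have := Nat.le_of_dvd (by omega) hdvd2
    omega
end

section
/- Let G be a finite abelian group, χ a non-principal (nontrivial) complex character of G, and D₁,…,Dₘ a (v,m,k,λ)-SEDF in G with λ > 0. Then χ(D_j) ≠ 0 for all 1 ≤ j ≤ m, where χ(D_j) denotes the sum of χ(g) over g ∈ D_j. -/
lemma char_sum_zero (G : Type) [CommGroup G] [Fintype G]
    (χ : G →* ℂ) (hχ : χ ≠ 1) : ∑ g : G, χ g = 0 := by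
  obtain ⟨a, ha⟩ : ∃ a : G, χ a ≠ 1 := by
    by_contra hc
    push_neg at hc
    exact hχ (MonoidHom.ext fun x => by simp [hc x])
  have key : χ a * ∑ g : G, χ g = ∑ g : G, χ g := by
    rw [Finset.mul_sum]
    simp_rw [← map_mul]
    exact Fintype.sum_equiv (Equiv.mulLeft a) _ _ (fun x => rfl)
  have : (χ a - 1) * ∑ g : G, χ g = 0 := by linear_combination key
  rcases mul_eq_zero.mp this with h1 | h2
  · exact absurd (sub_eq_zero.mp h1) ha
  · exact h2

/-- A `(v,m,k,λ)`-strong external difference family in a finite abelian group `G`: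
`m` pairwise disjoint `k`-subsets `D j` of `G`, `|G| = v`, such that for each `j`,
every non-identity `g ∈ G` has exactly `λ` representations `g = x * y⁻¹` with
`x ∈ D j`, `y ∈ D ℓ`, `ℓ ≠ j`, and the identity has no such representations. -/
def IsSEDF (G : Type) [CommGroup G] [Fintype G] [DecidableEq G]
    (v m k lam : ℕ) (D : Fin m → Finset G) : Prop :=
  Fintype.card G = v ∧
  (∀ j, (D j).card = k) ∧
  (∀ i j : Fin m, i ≠ j → Disjoint (D i) (D j)) ∧
  ∀ (j : Fin m) (g : G),
    (Finset.univ.filter (fun p : Fin m × G × G =>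
      p.1 ≠ j ∧ p.2.1 ∈ D j ∧ p.2.2 ∈ D p.1 ∧ p.2.1 * p.2.2⁻¹ = g)).card
      = if g = 1 then 0 else lam

theorem stmt_4 (G : Type) [CommGroup G] [Fintype G] [DecidableEq G]
    (v m k lam : ℕ) (hlam : 0 < lam) (D : Fin m → Finset G)
    (h : IsSEDF G v m k lam D) (χ : G →* ℂ) (hχ : χ ≠ 1) :
    ∀ j : Fin m, ∑ g ∈ D j, χ g ≠ 0 := by
  intro j hS
  obtain ⟨-, -, -, hcount⟩ := h
  set A : Finset (Fin m × G × G) := Finset.univ.filter (fun p =>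
      p.1 ≠ j ∧ p.2.1 ∈ D j ∧ p.2.2 ∈ D p.1) with hA
  have key1 : ∑ p ∈ A, χ (p.2.1 * p.2.2⁻¹) = -(lam : ℂ) := by
    rw [← Finset.sum_fiberwise A (fun p => p.2.1 * p.2.2⁻¹)
        (fun p => χ (p.2.1 * p.2.2⁻¹))]
    have fib : ∀ g : G,
        ∑ p ∈ A.filter (fun p => p.2.1 * p.2.2⁻¹ = g), χ (p.2.1 * p.2.2⁻¹)
          = (if g = 1 then 0 else lam : ℕ) * χ g := by
      intro g
      rw [← hcount j g]
      have hAf : A.filter (fun p => p.2.1 * p.2.2⁻¹ = g)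
          = Finset.univ.filter (fun p : Fin m × G × G =>
              p.1 ≠ j ∧ p.2.1 ∈ D j ∧ p.2.2 ∈ D p.1 ∧ p.2.1 * p.2.2⁻¹ = g) := by
        rw [hA, Finset.filter_filter]
        apply Finset.filter_congr
        intro p _
        simp [and_assoc]
      rw [hAf]
      calc _ = ∑ _p ∈ Finset.univ.filter (fun p : Fin m × G × G =>
              p.1 ≠ j ∧ p.2.1 ∈ D j ∧ p.2.2 ∈ D p.1 ∧ p.2.1 * p.2.2⁻¹ = g), χ g :=
            Finset.sum_congr rfl (fun p hp => by
              rw [(Finset.mem_filter.mp hp).2.2.2.2])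
        _ = _ := by rw [Finset.sum_const, nsmul_eq_mul]
    rw [Finset.sum_congr rfl (fun g _ => fib g)]
    have : ∀ g : G, ((if g = 1 then 0 else lam : ℕ) : ℂ) * χ g
        = (lam : ℂ) * χ g - (if g = 1 then (lam : ℂ) * χ g else 0) := by
      intro g; split <;> simp
    rw [Finset.sum_congr rfl (fun g _ => this g), Finset.sum_sub_distrib,
      Finset.sum_ite_eq' Finset.univ (1 : G) (fun g => (lam : ℂ) * χ g)]
    simp [← Finset.mul_sum, char_sum_zero G χ hχ]
  have key2 : ∑ p ∈ A, χ (p.2.1 * p.2.2⁻¹) = 0 := by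
    have : ∑ p ∈ A, χ (p.2.1 * p.2.2⁻¹)
        = ∑ ℓ : Fin m, ∑ x : G, ∑ y : G,
            if ℓ ≠ j ∧ x ∈ D j ∧ y ∈ D ℓ then χ x * χ y⁻¹ else 0 := by
      rw [hA, Finset.sum_filter, Fintype.sum_prod_type]
      congr 1; ext ℓ
      rw [Fintype.sum_prod_type]
      congr 1; ext x; congr 1; ext y
      split
      · exact map_mul χ _ _
      · rfl
    rw [this]
    have inner : ∀ ℓ : Fin m, ∑ x : G, ∑ y : G,
        (if ℓ ≠ j ∧ x ∈ D j ∧ y ∈ D ℓ then χ x * χ y⁻¹ else 0)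
        = if ℓ ≠ j then (∑ x ∈ D j, χ x) * (∑ y ∈ D ℓ, χ y⁻¹) else 0 := by
      intro ℓ
      by_cases hℓ : ℓ ≠ j
      · have hcond : ∀ x y : G, (ℓ ≠ j ∧ x ∈ D j ∧ y ∈ D ℓ) = (x ∈ D j ∧ y ∈ D ℓ) :=
          fun x y => by simp [hℓ]
        simp only [hcond, if_pos hℓ]
        rw [Finset.sum_mul_sum]
        rw [← Finset.sum_subset (Finset.subset_univ (D j))]
        · apply Finset.sum_congr rfl
          intro x hx
          rw [← Finset.sum_subset (Finset.subset_univ (D ℓ))]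
          · exact Finset.sum_congr rfl (fun y hy => by simp [hx, hy])
          · intro y _ hy; simp [hy]
        · intro x _ hx
          apply Finset.sum_eq_zero
          intro y _; simp [hx]
      · simp [hℓ]
    rw [Finset.sum_congr rfl (fun ℓ _ => inner ℓ)]
    apply Finset.sum_eq_zero
    intro ℓ _
    split
    · rw [hS, zero_mul]
    · rfl
  rw [key2] at key1
  have hl0 : (lam : ℂ) = 0 := neg_eq_zero.mp key1.symm
  exact hlam.ne' (Nat.cast_eq_zero.mp hl0)
end

section
/- Let G be a finite abelian group, χ a nontrivial character of G, and D₁,…,Dₘ a (v,m,k,λ)-SEDF in G with λ > 0. If χ(𝒟) = 0, where 𝒟 = D₁ ∪ ⋯ ∪ Dₘ, then |χ(D_j)|² = λ for all j. -/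
open Finset

lemma char_sum_univ_eq_zero {G : Type} [CommGroup G] [Fintype G]
    (χ : G →* ℂ) (hχ : χ ≠ 1) : ∑ g : G, χ g = 0 := by
  obtain ⟨a, ha⟩ : ∃ a, χ a ≠ 1 := by
    by_contra hc
    push_neg at hc
    exact hχ (MonoidHom.ext fun g => hc g)
  have key : χ a * ∑ g : G, χ g = ∑ g : G, χ g := by
    rw [Finset.mul_sum]
    simp_rw [← map_mul]
    exact Fintype.sum_equiv (Equiv.mulLeft a) _ _ (fun g => rfl)
  have h2 : (χ a - 1) * ∑ g : G, χ g = 0 := by linear_combination key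
  rcases mul_eq_zero.mp h2 with h3 | h3
  · exact absurd (sub_eq_zero.mp h3) ha
  · exact h3

lemma char_norm_one {G : Type} [CommGroup G] [Fintype G]
    (χ : G →* ℂ) (g : G) : ‖χ g‖ = 1 := by
  refine Complex.norm_eq_one_of_pow_eq_one (n := orderOf g) ?_ (orderOf_pos g).ne'
  rw [← map_pow, pow_orderOf_eq_one, map_one]

lemma char_inv_eq_conj {G : Type} [CommGroup G] [Fintype G]
    (χ : G →* ℂ) (g : G) : χ g⁻¹ = starRingEnd ℂ (χ g) := by
  have hn := char_norm_one χ g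
  have hns : Complex.normSq (χ g) = 1 := by
    rw [Complex.normSq_eq_norm_sq, hn, one_pow]
  have h1 : χ g * χ g⁻¹ = 1 := by rw [← map_mul, mul_inv_cancel, map_one]
  have h2 : χ g * starRingEnd ℂ (χ g) = 1 := by
    rw [Complex.mul_conj, hns, Complex.ofReal_one]
  have hne : χ g ≠ 0 := by
    intro hz; rw [hz, norm_zero] at hn; norm_num at hn
  exact mul_left_cancel₀ hne (h1.trans h2.symm)

theorem stmt_5 (G : Type) [CommGroup G] [Fintype G] [DecidableEq G]
    (v m k lam : ℕ) (hlam : 0 < lam) (D : Fin m → Finset G)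
    (h : IsSEDF G v m k lam D) (χ : G →* ℂ) (hχ : χ ≠ 1)
    (h0 : ∑ g ∈ Finset.univ.biUnion D, χ g = 0) :
    ∀ j : Fin m, ‖∑ g ∈ D j, χ g‖ ^ 2 = (lam : ℝ) := by
  obtain ⟨hv, hk, hdisj, hcount⟩ := h
  intro j
  set S : Fin m → ℂ := fun ℓ => ∑ g ∈ D ℓ, χ g with hS
  have hsum0 : ∑ ℓ, S ℓ = 0 := by
    rw [← Finset.sum_biUnion (fun i _ l _ hil => hdisj i l hil)]
    exact h0
  set P : Finset (Fin m × G × G) := Finset.univ.filter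
    (fun p => p.1 ≠ j ∧ p.2.1 ∈ D j ∧ p.2.2 ∈ D p.1) with hP
  -- Step A: character sum over P equals -lam
  have stepA : ∑ p ∈ P, χ (p.2.1 * p.2.2⁻¹) = -(lam : ℂ) := by
    rw [← Finset.sum_fiberwise P (fun p => p.2.1 * p.2.2⁻¹) (fun p => χ (p.2.1 * p.2.2⁻¹))]
    have hfib : ∀ g : G, ∑ p ∈ P.filter (fun p => p.2.1 * p.2.2⁻¹ = g),
        χ (p.2.1 * p.2.2⁻¹) = (if g = 1 then (0:ℂ) else (lam : ℂ)) * χ g := by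
      intro g
      have hcard : (P.filter (fun p => p.2.1 * p.2.2⁻¹ = g)).card
          = if g = 1 then 0 else lam := by
        rw [hP, Finset.filter_filter, ← hcount j g]
        congr 1
        ext p
        simp only [Finset.mem_filter, Finset.mem_univ, true_and]
        tauto
      rw [Finset.sum_congr rfl (fun p hp => by
        rw [(Finset.mem_filter.mp hp).2]), Finset.sum_const, hcard]
      split_ifs <;> simp
    rw [Finset.sum_congr rfl (fun g _ => hfib g)]
    have : ∀ g : G, (if g = 1 then (0:ℂ) else (lam:ℂ)) * χ g
        = (lam:ℂ) * χ g - (if g = 1 then (lam:ℂ) * χ g else 0) := by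
      intro g; split_ifs <;> ring
    rw [Finset.sum_congr rfl (fun g _ => this g), Finset.sum_sub_distrib,
      ← Finset.mul_sum, char_sum_univ_eq_zero χ hχ,
      Finset.sum_ite_eq' Finset.univ (1:G) (fun g => (lam:ℂ) * χ g)]
    simp
  -- Step B: character sum over P equals -(S j * conj (S j))
  have stepB : ∑ p ∈ P, χ (p.2.1 * p.2.2⁻¹)
      = -(S j * starRingEnd ℂ (S j)) := by
    rw [hP, Finset.sum_filter, Fintype.sum_prod_type]
    have hin : ∀ ℓ : Fin m, ∑ p : G × G,
        (if ℓ ≠ j ∧ p.1 ∈ D j ∧ p.2 ∈ D ℓ then χ (p.1 * p.2⁻¹) else 0)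
        = if ℓ ≠ j then S j * starRingEnd ℂ (S ℓ) else 0 := by
      intro ℓ
      split_ifs with hl
      · rw [Fintype.sum_prod_type]
        simp only [hl, ne_eq, not_false_eq_true, ite_true, true_and, ite_and,
          Finset.sum_ite_mem, Finset.univ_inter]
        rw [Finset.sum_congr rfl (fun x _ => Finset.sum_congr rfl (fun y _ => by
          rw [map_mul, char_inv_eq_conj]))]
        have inner : ∀ x : G, (∑ y : G, if x ∈ D j then
            if y ∈ D ℓ then χ x * starRingEnd ℂ (χ y) else 0 else 0)
            = if x ∈ D j then ∑ y ∈ D ℓ, χ x * starRingEnd ℂ (χ y) else 0 := by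
          intro x
          split_ifs with hx
          · simp [hx, Finset.sum_ite_mem, Finset.univ_inter]
          · simp [hx]
        rw [Finset.sum_congr rfl (fun x _ => inner x), Finset.sum_ite_mem,
          Finset.univ_inter, hS]
        simp only [map_sum]
        rw [Finset.sum_mul_sum]
      · simp [hl]
    rw [Finset.sum_congr rfl (fun ℓ _ => hin ℓ)]
    rw [← Finset.sum_filter]
    have : ∑ ℓ ∈ Finset.univ.filter (· ≠ j), S j * starRingEnd ℂ (S ℓ)
        = S j * starRingEnd ℂ (∑ ℓ ∈ Finset.univ.filter (· ≠ j), S ℓ) := by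
      rw [map_sum, Finset.mul_sum]
    rw [this]
    have hrest : ∑ ℓ ∈ Finset.univ.filter (· ≠ j), S ℓ = -(S j) := by
      have := Finset.sum_filter_add_sum_filter_not Finset.univ (· ≠ j) S
      simp only [not_not] at this
      have h2 : ∑ ℓ ∈ Finset.univ.filter (· = j), S ℓ = S j := by
        rw [Finset.filter_eq']
        simp
      linear_combination this - h2 + hsum0
    rw [hrest, map_neg]
    ring
  have key : (Complex.normSq (S j) : ℂ) = (lam : ℂ) := by
    have := stepB.symm.trans stepA
    rw [Complex.mul_conj] at this
    linear_combination -this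
  have hreal : Complex.normSq (S j) = (lam : ℝ) := by
    exact_mod_cast key
  rw [← hreal, ← Complex.sq_norm]
end

section
/- Let x₁, x₂, x₃ be nonzero complex numbers satisfying x₁·conj(x₂) + x₁·conj(x₃) = −λ, x₂·conj(x₁) + x₂·conj(x₃) = −λ, and x₃·conj(x₁) + x₃·conj(x₂) = −λ for some real λ > 0, and suppose each x_j = α_j·X for some nonzero complex X and nonzero real numbers α_j. Then a contradiction follows; i.e., no such x₁, x₂, x₃ exist. -/
theorem stmt_7 (x₁ x₂ x₃ X : ℂ) (lam : ℝ) (hlam : 0 < lam)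
    (hx₁ : x₁ ≠ 0) (hx₂ : x₂ ≠ 0) (hx₃ : x₃ ≠ 0) (hX : X ≠ 0)
    (α₁ α₂ α₃ : ℝ) (hα₁ : α₁ ≠ 0) (hα₂ : α₂ ≠ 0) (hα₃ : α₃ ≠ 0)
    (he₁ : x₁ = (α₁ : ℂ) * X) (he₂ : x₂ = (α₂ : ℂ) * X) (he₃ : x₃ = (α₃ : ℂ) * X)
    (h1 : x₁ * (starRingEnd ℂ) x₂ + x₁ * (starRingEnd ℂ) x₃ = -(lam : ℂ))
    (h2 : x₂ * (starRingEnd ℂ) x₁ + x₂ * (starRingEnd ℂ) x₃ = -(lam : ℂ))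
    (h3 : x₃ * (starRingEnd ℂ) x₁ + x₃ * (starRingEnd ℂ) x₂ = -(lam : ℂ)) :
    False := by
  subst he₁ he₂ he₃
  have hr : 0 < Complex.normSq X := Complex.normSq_pos.mpr hX
  set r := Complex.normSq X with hrdef
  have hXc : X * (starRingEnd ℂ) X = (r : ℂ) := Complex.mul_conj X
  have e1 : ((α₁ * α₂ * r + α₁ * α₃ * r : ℝ) : ℂ) = ((-lam : ℝ) : ℂ) := by
    push_cast
    rw [← h1]
    simp only [map_mul, Complex.conj_ofReal]
    rw [← hXc]; ring
  have e2 : ((α₂ * α₁ * r + α₂ * α₃ * r : ℝ) : ℂ) = ((-lam : ℝ) : ℂ) := by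
    push_cast
    rw [← h2]
    simp only [map_mul, Complex.conj_ofReal]
    rw [← hXc]; ring
  have e3 : ((α₃ * α₁ * r + α₃ * α₂ * r : ℝ) : ℂ) = ((-lam : ℝ) : ℂ) := by
    push_cast
    rw [← h3]
    simp only [map_mul, Complex.conj_ofReal]
    rw [← hXc]; ring
  have r1 := Complex.ofReal_inj.mp e1
  have r2 := Complex.ofReal_inj.mp e2
  have r3 := Complex.ofReal_inj.mp e3
  have h12 : α₁ = α₂ := by
    have : (α₁ - α₂) * (α₃ * r) = 0 := by nlinarith [r1, r2]
    rcases mul_eq_zero.mp this with h | h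
    · linarith [sub_eq_zero.mp h]
    · exact absurd h (mul_ne_zero hα₃ (ne_of_gt hr))
  have h13 : α₁ = α₃ := by
    have : (α₁ - α₃) * (α₂ * r) = 0 := by nlinarith [r1, r3]
    rcases mul_eq_zero.mp this with h | h
    · linarith [sub_eq_zero.mp h]
    · exact absurd h (mul_ne_zero hα₂ (ne_of_gt hr))
  subst h12 h13
  nlinarith [sq_nonneg α₁, mul_pos (mul_pos (mul_self_pos.mpr hα₁) hr) hr, sq_nonneg (α₁ * r)]
end

section
/- Let m ≥ 4 and let α₁,…,αₘ be nonzero real numbers such that for all distinct indices r, s: α_r·(Σ_{ℓ≠r,s} α_ℓ) = α_s·(Σ_{ℓ≠r,s} α_ℓ). Then the set {α₁,…,αₘ} has at most two distinct values. -/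
theorem stmt_10 (m : ℕ) (hm : 4 ≤ m) (α : Fin m → ℝ) (hα : ∀ j, α j ≠ 0)
    (h : ∀ r s : Fin m, r ≠ s →
      α r * (∑ ℓ ∈ Finset.univ \ {r, s}, α ℓ) =
      α s * (∑ ℓ ∈ Finset.univ \ {r, s}, α ℓ)) :
    (Finset.univ.image α).card ≤ 2 := by
  by_contra hc
  push_neg at hc
  obtain ⟨a, b, c, ha, hb, hcmem, hab, hac, hbc⟩ := Finset.two_lt_card_iff.mp hc
  obtain ⟨r, -, rfl⟩ := Finset.mem_image.mp ha
  obtain ⟨s, -, rfl⟩ := Finset.mem_image.mp hb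
  obtain ⟨t, -, rfl⟩ := Finset.mem_image.mp hcmem
  have key : ∀ u v : Fin m, α u ≠ α v →
      (∑ ℓ, α ℓ) - α u - α v = 0 := by
    intro u v huv
    have huv' : u ≠ v := fun e => huv (by rw [e])
    have hsum : (∑ ℓ ∈ Finset.univ \ {u, v}, α ℓ) = (∑ ℓ, α ℓ) - (α u + α v) := by
      rw [Finset.sum_sdiff_eq_sub (Finset.subset_univ _), Finset.sum_pair huv']
    have := h u v huv'
    rw [hsum] at this
    have h2 : (α u - α v) * ((∑ ℓ, α ℓ) - (α u + α v)) = 0 := by ring_nf; linarith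
    rcases mul_eq_zero.mp h2 with h3 | h3
    · exact absurd (by linarith : α u = α v) huv
    · linarith
  have k1 := key r s hab
  have k2 := key r t hac
  have k3 := key s t hbc
  exact hbc (by linarith)
end

section
/- Let m ≥ 4 even, X ≠ 0 complex, λ > 0 real, and α₁,…,αₘ nonzero reals taking exactly two distinct values α and β, each exactly m/2 times, with x_j := α_j X satisfying Σ_{ℓ≠j} x_j conj(x_ℓ) = −λ for all j and Σ_j α_j = 1. Then a contradiction follows; i.e., an even split is impossible. -/
theorem stmt_12 (m : ℕ) (hm : 4 ≤ m) (hmeven : Even m)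
    (X : ℂ) (hX : X ≠ 0) (lam : ℝ) (hlam : 0 < lam)
    (α : Fin m → ℝ) (hα : ∀ j, α j ≠ 0) (a b : ℝ) (hab : a ≠ b)
    (hval : ∀ j, α j = a ∨ α j = b)
    (hA : (Finset.univ.filter (fun j => α j = a)).card = m / 2)
    (hB : (Finset.univ.filter (fun j => α j = b)).card = m / 2)
    (h : ∀ j : Fin m, ∑ ℓ ∈ Finset.univ \ {j},
      ((α j : ℂ) * X) * (starRingEnd ℂ) ((α ℓ : ℂ) * X) = -(lam : ℂ))
    (hsum : ∑ j, α j = 1) :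
    False := by
  have ht : (0:ℝ) < Complex.normSq X := Complex.normSq_pos.mpr hX
  -- key identity
  have key : ∀ j, α j * (1 - α j) * Complex.normSq X = -lam := by
    intro j
    have hs : ∑ ℓ ∈ Finset.univ \ {j}, α ℓ = 1 - α j := by
      have := Finset.sum_sdiff_eq_sub (Finset.singleton_subset_iff.mpr
        (Finset.mem_univ j)) (f := α)
      rw [this, Finset.sum_singleton, hsum]
    have hc := h j
    have : ∑ ℓ ∈ Finset.univ \ {j},
        ((α j : ℂ) * X) * (starRingEnd ℂ) ((α ℓ : ℂ) * X)
        = ((α j : ℝ) : ℂ) * (1 - (α j : ℂ)) * (Complex.normSq X : ℂ) := by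
      rw [← Complex.mul_conj]
      have h1 : ∀ ℓ ∈ Finset.univ \ {j}, ((α j : ℂ) * X) * (starRingEnd ℂ) ((α ℓ : ℂ) * X)
          = ((α j : ℂ) * (X * (starRingEnd ℂ) X)) * ((α ℓ : ℝ) : ℂ) := by
        intro ℓ _
        simp only [map_mul, Complex.conj_ofReal]
        ring
      rw [Finset.sum_congr rfl h1, ← Finset.mul_sum, ← Complex.ofReal_sum, hs]
      push_cast
      ring
    rw [this] at hc
    have : (((α j * (1 - α j) * Complex.normSq X) : ℝ) : ℂ) = ((-lam : ℝ) : ℂ) := by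
      push_cast [← hc]; ring
    exact_mod_cast this
  -- pick witnesses
  have hm2 : 2 ≤ m / 2 := by omega
  have hane : (Finset.univ.filter (fun j => α j = a)).Nonempty := by
    rw [← Finset.card_pos, hA]; omega
  have hbne : (Finset.univ.filter (fun j => α j = b)).Nonempty := by
    rw [← Finset.card_pos, hB]; omega
  obtain ⟨ja, hja⟩ := hane
  obtain ⟨jb, hjb⟩ := hbne
  simp only [Finset.mem_filter] at hja hjb
  have ea := key ja
  have eb := key jb
  rw [hja.2] at ea
  rw [hjb.2] at eb
  have habsum : a + b = 1 := by
    have h1 : a * (1 - a) = b * (1 - b) := by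
      have := ea.trans eb.symm
      exact mul_right_cancel₀ (ne_of_gt ht) this
    have h2 : (a - b) * (1 - (a + b)) = 0 := by ring_nf; nlinarith [h1]
    rcases mul_eq_zero.mp h2 with h3 | h3
    · exact absurd (by linarith) hab
    · linarith
  -- compute the sum
  have hsplit : ∑ j, α j = (m / 2 : ℕ) * a + (m / 2 : ℕ) * b := by
    rw [← Finset.sum_filter_add_sum_filter_not Finset.univ (fun j => α j = a) α]
    congr 1
    · rw [Finset.sum_congr rfl (fun j hj => (Finset.mem_filter.mp hj).2),
        Finset.sum_const, hA, nsmul_eq_mul]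
    · have hfe : Finset.univ.filter (fun j => ¬ α j = a)
          = Finset.univ.filter (fun j => α j = b) := by
        apply Finset.filter_congr
        intro j _
        rcases hval j with h' | h' <;> simp [h', hab, hab.symm]
      rw [hfe, Finset.sum_congr rfl (fun j hj => (Finset.mem_filter.mp hj).2),
        Finset.sum_const, hB, nsmul_eq_mul]
  rw [hsum] at hsplit
  have : (1:ℝ) = (m/2 : ℕ) := by
    rw [hsplit]; rw [← mul_add, habsum, mul_one]
  have : ((m/2 : ℕ) : ℝ) ≥ 2 := by exact_mod_cast hm2
  linarith [this]
end

section
/- Let m ≥ 4, X ≠ 0 complex, λ > 0 real, and α₁,…,αₘ nonzero reals taking at most two values, one of them, α, occurring exactly once (say α₁ = α and α_j = β for j ≥ 2), with x_j := α_j X satisfying Σ_{ℓ≠j} x_j conj(x_ℓ) = −λ for all j and Σ_j α_j = 1. Then a contradiction follows; i.e., the split (1, m−1) is impossible. -/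
theorem stmt_13 (m : ℕ) (hm : 4 ≤ m) (X : ℂ) (hX : X ≠ 0) (lam : ℝ) (hlam : 0 < lam)
    (α : Fin m → ℝ) (hα : ∀ j, α j ≠ 0) (a b : ℝ)
    (h0 : α ⟨0, by omega⟩ = a) (hrest : ∀ j : Fin m, j ≠ ⟨0, by omega⟩ → α j = b)
    (h : ∀ j : Fin m, ∑ ℓ ∈ Finset.univ \ {j},
      ((α j : ℂ) * X) * (starRingEnd ℂ) ((α ℓ : ℂ) * X) = -(lam : ℂ))
    (hsum : ∑ j, α j = 1) :
    False := by
  have hm' : 0 < m := by omega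
  set j0 : Fin m := ⟨0, by omega⟩ with hj0
  have hX2 : (0:ℝ) < Complex.normSq X := Complex.normSq_pos.mpr hX
  have key : ∀ j : Fin m, α j * (1 - α j) * Complex.normSq X = -lam := by
    intro j
    have hj := h j
    have hsum' : ∑ ℓ ∈ Finset.univ \ {j}, (α ℓ : ℂ) = ((1 - α j : ℝ) : ℂ) := by
      have h1 : ∑ ℓ ∈ Finset.univ \ {j}, α ℓ = 1 - α j := by
        rw [Finset.sdiff_singleton_eq_erase]
        have := Finset.add_sum_erase Finset.univ α (Finset.mem_univ j)
        rw [hsum] at this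
        linarith
      push_cast [← h1]
      rfl
    have hfac : ∑ ℓ ∈ Finset.univ \ {j}, ((α j : ℂ) * X) * (starRingEnd ℂ) ((α ℓ : ℂ) * X)
        = (α j : ℂ) * (X * (starRingEnd ℂ) X) * ∑ ℓ ∈ Finset.univ \ {j}, (α ℓ : ℂ) := by
      rw [Finset.mul_sum]
      refine Finset.sum_congr rfl fun ℓ _ => ?_
      simp only [map_mul, Complex.conj_ofReal]
      ring
    rw [hfac, hsum', Complex.mul_conj] at hj
    have : ((α j * (1 - α j) * Complex.normSq X : ℝ) : ℂ) = ((-lam : ℝ) : ℂ) := by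
      push_cast at hj ⊢
      rw [← hj]; ring
    exact_mod_cast this
  -- sum formula
  have hsum2 : a + (m - 1 : ℕ) * b = 1 := by
    rw [← hsum, ← Finset.add_sum_erase Finset.univ α (Finset.mem_univ j0), h0]
    congr 1
    rw [Finset.sum_congr rfl (fun j hj => hrest j (Finset.mem_erase.mp hj).1)]
    rw [Finset.sum_const, Finset.card_erase_of_mem (Finset.mem_univ j0), Finset.card_univ,
      Fintype.card_fin, nsmul_eq_mul]
  have j1 : Fin m := ⟨1, by omega⟩
  have key0 : a * (1 - a) * Complex.normSq X = -lam := by rw [← h0]; exact key j0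
  have key1 : b * (1 - b) * Complex.normSq X = -lam := by
    have hne : (⟨1, by omega⟩ : Fin m) ≠ j0 := by simp [hj0, Fin.ext_iff]
    rw [← hrest _ hne]; exact key ⟨1, by omega⟩
  have hb := hα ⟨1, by omega⟩
  rw [hrest _ (by simp [hj0, Fin.ext_iff])] at hb
  have hfac2 : (a - b) * (a + b - 1) = 0 := by
    have : (a * (1 - a) - b * (1 - b)) * Complex.normSq X = 0 := by linarith
    have h2 : a * (1 - a) - b * (1 - b) = 0 := by
      rcases mul_eq_zero.mp this with h' | h'
      · exact h'
      · linarith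
    nlinarith [h2]
  have hM : (4:ℝ) ≤ (m:ℝ) := by exact_mod_cast hm
  have hM1 : ((m - 1 : ℕ) : ℝ) = (m:ℝ) - 1 := by
    push_cast [Nat.cast_sub (by omega : 1 ≤ m)]; ring
  rw [hM1] at hsum2
  rcases mul_eq_zero.mp hfac2 with h' | h'
  · -- a = b, so m * b = 1
    have hab : a = b := by linarith
    have hmb : (m:ℝ) * b = 1 := by rw [hab] at hsum2; linarith
    have hbpos : 0 < b := by
      rcases lt_trichotomy b 0 with hlt | heq | hgt
      · nlinarith
      · exact absurd heq hb
      · exact hgt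
    have hb1 : b < 1 := by nlinarith
    nlinarith [mul_pos (mul_pos hbpos (by linarith : (0:ℝ) < 1 - b)) hX2]
  · -- a + b = 1, then (m-2) b = 0, b = 0
    have : ((m:ℝ) - 2) * b = 0 := by linarith
    rcases mul_eq_zero.mp this with h'' | h''
    · linarith
    · exact hb h''
end

section
/- (Lam–Leung, two-prime case, cardinality version) Let p and q be distinct primes, n = pq, ω a primitive n-th root of unity, and S ⊆ ℤ/nℤ a subset with Σ_{a∈S} ω^a = 0. Then p ∣ |S| or q ∣ |S|. -/
open Finset

lemma pow_mod_eq {γ : ℂ} {r : ℕ} (h1 : γ ^ r = 1) {x y : ℕ} (h : x ≡ y [MOD r]) :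
    γ ^ x = γ ^ y := by
  rw [pow_eq_pow_mod x h1, pow_eq_pow_mod y h1, h]

lemma char_add {γ : ℂ} {r : ℕ} [NeZero r] (h1 : γ ^ r = 1) (x y : ZMod r) :
    γ ^ (x + y).val = γ ^ x.val * γ ^ y.val := by
  rw [← pow_add]
  apply pow_mod_eq h1
  rw [ZMod.val_add]
  exact (Nat.mod_modEq _ r)

lemma char_mul_nat {γ : ℂ} {r : ℕ} [NeZero r] (h1 : γ ^ r = 1) (m : ℕ) (x : ZMod r) :
    γ ^ (m * x.val) = γ ^ (((m : ZMod r) * x)).val := by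
  apply pow_mod_eq h1
  have h0 : (((m : ZMod r) * x)).val ≡ (m : ZMod r).val * x.val [MOD r] := by
    rw [ZMod.val_mul]; exact (Nat.mod_modEq _ r)
  have h2 : (m : ZMod r).val * x.val ≡ m * x.val [MOD r] :=
    Nat.ModEq.mul_right _ (by rw [ZMod.val_natCast]; exact Nat.mod_modEq m r)
  exact (h0.trans h2).symm

lemma sum_zmod_pow {γ : ℂ} {r : ℕ} [NeZero r] (hγ : IsPrimitiveRoot γ r) (hr : 1 < r) :
    ∑ x : ZMod r, γ ^ x.val = 0 := by
  rw [← hγ.geom_sum_eq_zero hr]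
  refine Finset.sum_bij' (fun (x : ZMod r) (_ : x ∈ univ) => x.val)
    (fun k (_ : k ∈ range r) => (k : ZMod r)) ?_ ?_ ?_ ?_ ?_
  · intro a _; exact Finset.mem_range.mpr (ZMod.val_lt a)
  · intro a _; exact Finset.mem_univ _
  · intro a _; exact ZMod.natCast_zmod_val a
  · intro a ha; exact ZMod.val_cast_of_lt (Finset.mem_range.mp ha)
  · intro a _; rfl

lemma sum_units_pow {γ : ℂ} {r : ℕ} (hr : r.Prime) [Fact r.Prime]
    (hγ : IsPrimitiveRoot γ r) (d : ZMod r) :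
    ∑ s : (ZMod r)ˣ, γ ^ ((s : ZMod r) * d).val = if d = 0 then (r : ℂ) - 1 else -1 := by
  rcases eq_or_ne d 0 with hd | hd
  · subst hd
    simp only [mul_zero, ZMod.val_zero, pow_zero, Finset.sum_const, nsmul_eq_mul, mul_one,
      if_pos rfl, Finset.card_univ, ZMod.card_units r]
    have h1 : (1 : ℕ) ≤ r := hr.one_lt.le
    push_cast [Nat.cast_sub h1]
    ring
  · rw [if_neg hd]
    have key : ∑ s : (ZMod r)ˣ, γ ^ ((s : ZMod r) * d).val = ∑ x ∈ univ.erase (0 : ZMod r), γ ^ x.val := by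
      refine Finset.sum_bij' (fun (s : (ZMod r)ˣ) (_ : s ∈ univ) => (s : ZMod r) * d)
        (fun x (hx : x ∈ univ.erase 0) => Units.mk0 x (Finset.ne_of_mem_erase hx) * (Units.mk0 d hd)⁻¹)
        ?_ ?_ ?_ ?_ ?_
      · intro a _
        refine Finset.mem_erase.mpr ⟨mul_ne_zero (Units.ne_zero a) hd, Finset.mem_univ _⟩
      · intro a _; exact Finset.mem_univ _
      · intro a _
        ext
        push_cast
        field_simp
        rw [Units.val_mk0, Units.val_mk0]; exact mul_div_cancel_right₀ _ hd
      · intro x hx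
        push_cast
        field_simp
        rw [Units.val_mk0, Units.val_mk0]; exact mul_div_cancel_right₀ _ hd
      · intro a _; rfl
    rw [key]
    have total := sum_zmod_pow hγ hr.one_lt
    have h2 := Finset.add_sum_erase univ (fun x : ZMod r => γ ^ x.val) (Finset.mem_univ (0 : ZMod r))
    rw [total] at h2
    simp only [ZMod.val_zero, pow_zero] at h2
    linear_combination h2

theorem stmt_16 (p q : ℕ) (hp : p.Prime) (hq : q.Prime) (hpq : p ≠ q)
    (ω : ℂ) (hω : IsPrimitiveRoot ω (p * q))
    (S : Finset (ZMod (p * q))) (h : ∑ a ∈ S, ω ^ a.val = 0) :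
    p ∣ S.card ∨ q ∣ S.card := by
  haveI : Fact p.Prime := ⟨hp⟩
  haveI : Fact q.Prime := ⟨hq⟩
  have hcop : Nat.Coprime p q := (Nat.coprime_primes hp hq).mpr hpq
  have hn : 0 < p * q := Nat.mul_pos hp.pos hq.pos
  haveI : NeZero (p * q) := ⟨hn.ne'⟩
  have hω1 : ω ^ (p * q) = 1 := hω.pow_eq_one
  set α : ℂ := ω ^ q with hαdef
  set β : ℂ := ω ^ p with hβdef
  have hα : IsPrimitiveRoot α p := IsPrimitiveRoot.pow hn hω (mul_comm p q)
  have hβ : IsPrimitiveRoot β q := IsPrimitiveRoot.pow hn hω rfl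
  have hα1 : α ^ p = 1 := hα.pow_eq_one
  have hβ1 : β ^ q = 1 := hβ.pow_eq_one
  have hqp : (q : ZMod p) ≠ 0 := by
    rw [Ne, ZMod.natCast_eq_zero_iff]
    exact fun hd => hpq ((Nat.prime_dvd_prime_iff_eq hp hq).mp hd)
  have hpq0 : (p : ZMod q) ≠ 0 := by
    rw [Ne, ZMod.natCast_eq_zero_iff]
    exact fun hd => hpq ((Nat.prime_dvd_prime_iff_eq hq hp).mp hd).symm
  -- the bijection to ZMod p × ZMod q
  set e : ZMod (p * q) → ZMod p × ZMod q :=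
    fun a => ((q : ZMod p)⁻¹ * (a.val : ZMod p), (p : ZMod q)⁻¹ * (a.val : ZMod q)) with hedef
  -- combining congruences
  have hcomb : ∀ x y : ℕ, (x : ZMod p) = (y : ZMod p) → (x : ZMod q) = (y : ZMod q) →
      (x : ZMod (p * q)) = (y : ZMod (p * q)) := by
    intro x y h1 h2
    rw [ZMod.natCast_eq_natCast_iff] at h1 h2 ⊢
    exact (Nat.modEq_and_modEq_iff_modEq_mul hcop).mp ⟨h1, h2⟩
  have hkey_exp : ∀ a : ZMod (p * q),
      ((q * ((e a).1).val + p * ((e a).2).val : ℕ) : ZMod (p * q)) = ((a.val : ℕ) : ZMod (p * q)) := by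
    intro a
    apply hcomb
    · push_cast
      rw [ZMod.natCast_self p, zero_mul, add_zero, ZMod.natCast_zmod_val ((e a).1)]
      simp only [hedef]
      rw [← mul_assoc, mul_inv_cancel₀ hqp, one_mul]
    · push_cast
      rw [ZMod.natCast_self q, zero_mul, zero_add, ZMod.natCast_zmod_val ((e a).2)]
      simp only [hedef]
      rw [← mul_assoc, mul_inv_cancel₀ hpq0, one_mul]
  -- injectivity of e
  have einj : Set.InjOn e ↑S := by
    intro a _ a' _ hee
    have h1 : (a.val : ZMod p) = (a'.val : ZMod p) := by
      have := congrArg Prod.fst hee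
      simp only [hedef] at this
      exact mul_left_cancel₀ (inv_ne_zero hqp) this
    have h2 : (a.val : ZMod q) = (a'.val : ZMod q) := by
      have := congrArg Prod.snd hee
      simp only [hedef] at this
      exact mul_left_cancel₀ (inv_ne_zero hpq0) this
    have := hcomb _ _ h1 h2
    rwa [ZMod.natCast_zmod_val a, ZMod.natCast_zmod_val a'] at this
  set T : Finset (ZMod p × ZMod q) := S.image e with hTdef
  have hcard : T.card = S.card := Finset.card_image_of_injOn einj
  -- ω congruence helper
  have hωmod : ∀ {x y : ℕ}, (x : ZMod (p * q)) = (y : ZMod (p * q)) → ω ^ x = ω ^ y := by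
    intro x y hxy
    exact pow_mod_eq hω1 ((ZMod.natCast_eq_natCast_iff _ _ _).mp hxy)
  have hterm : ∀ a : ZMod (p * q), α ^ ((e a).1).val * β ^ ((e a).2).val = ω ^ a.val := by
    intro a
    rw [hαdef, hβdef, ← pow_mul, ← pow_mul, ← pow_add]
    exact hωmod (hkey_exp a)
  have hsum : ∑ x ∈ T, α ^ x.1.val * β ^ x.2.val = 0 := by
    rw [hTdef, Finset.sum_image (fun a ha b hb => einj ha hb)]
    rw [← h]
    exact Finset.sum_congr rfl fun a _ => hterm a
  -- conjugate relations
  have Rel : ∀ (s : (ZMod p)ˣ) (t : (ZMod q)ˣ),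
      ∑ x ∈ T, α ^ (((s : ZMod p) * x.1).val) * β ^ (((t : ZMod q) * x.2).val) = 0 := by
    intro s t
    obtain ⟨m, hm1, hm2⟩ := Nat.chineseRemainder hcop ((s : ZMod p)).val ((t : ZMod q)).val
    have hms : ((m : ℕ) : ZMod p) = (s : ZMod p) := by
      rw [(ZMod.natCast_eq_natCast_iff _ _ _).mpr hm1, ZMod.natCast_zmod_val]
    have hmt : ((m : ℕ) : ZMod q) = (t : ZMod q) := by
      rw [(ZMod.natCast_eq_natCast_iff _ _ _).mpr hm2, ZMod.natCast_zmod_val]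
    have hmp : ¬ p ∣ m := by
      intro hd
      exact Units.ne_zero s (by rw [← hms, ZMod.natCast_eq_zero_iff]; exact hd)
    have hmq : ¬ q ∣ m := by
      intro hd
      exact Units.ne_zero t (by rw [← hmt, ZMod.natCast_eq_zero_iff]; exact hd)
    have hmcop : m.Coprime (p * q) :=
      Nat.Coprime.mul_right (Nat.coprime_comm.mp (hp.coprime_iff_not_dvd.mpr hmp))
        (Nat.coprime_comm.mp (hq.coprime_iff_not_dvd.mpr hmq))
    have hprim : IsPrimitiveRoot (ω ^ m) (p * q) := hω.pow_of_coprime m hmcop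
    set f : Polynomial ℚ := ∑ x ∈ T, Polynomial.X ^ (q * x.1.val + p * x.2.val) with hfdef
    have hfω : Polynomial.aeval ω f = 0 := by
      rw [hfdef, map_sum, ← hsum]
      refine Finset.sum_congr rfl fun x _ => ?_
      rw [map_pow, Polynomial.aeval_X, pow_add, pow_mul, pow_mul, ← hαdef, ← hβdef]
    have hdvd : minpoly ℚ ω ∣ f := minpoly.dvd ℚ ω hfω
    have hmin_eq : minpoly ℚ ω = minpoly ℚ (ω ^ m) :=
      (Polynomial.cyclotomic_eq_minpoly_rat hω hn).symm.trans
        (Polynomial.cyclotomic_eq_minpoly_rat hprim hn)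
    have hfm : Polynomial.aeval (ω ^ m) f = 0 := by
      obtain ⟨g, hg⟩ := hdvd
      have hz : Polynomial.aeval (ω ^ m) (minpoly ℚ ω) = 0 := by
        rw [hmin_eq]; exact minpoly.aeval ℚ (ω ^ m)
      rw [hg, map_mul, hz, zero_mul]
    rw [hfdef, map_sum] at hfm
    rw [← hfm]
    refine Finset.sum_congr rfl fun x _ => ?_
    rw [map_pow, Polynomial.aeval_X]
    calc α ^ ((s : ZMod p) * x.1).val * β ^ ((t : ZMod q) * x.2).val
        = α ^ (m * x.1.val) * β ^ (m * x.2.val) := by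
          rw [char_mul_nat hα1 m x.1, char_mul_nat hβ1 m x.2, hms, hmt]
      _ = ω ^ (q * (m * x.1.val)) * ω ^ (p * (m * x.2.val)) := by
          rw [hαdef, hβdef, ← pow_mul, ← pow_mul]
      _ = (ω ^ m) ^ (q * x.1.val + p * x.2.val) := by
          rw [← pow_add, ← pow_mul,
            show m * (q * x.1.val + p * x.2.val) = q * (m * x.1.val) + p * (m * x.2.val) by ring]
  -- averaged identity
  have Key : ∀ (a : ZMod p) (b : ZMod q),
      ∑ x ∈ T, (if x.1 = a then (p : ℂ) - 1 else -1) * (if x.2 = b then (q : ℂ) - 1 else -1)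
        = 0 := by
    intro a b
    have col := sum_units_pow hp hα
    have row := sum_units_pow hq hβ
    calc ∑ x ∈ T, (if x.1 = a then (p : ℂ) - 1 else -1) * (if x.2 = b then (q : ℂ) - 1 else -1)
        = ∑ x ∈ T, (∑ s : (ZMod p)ˣ, α ^ (((s : ZMod p) * (x.1 - a)).val)) *
            (∑ t : (ZMod q)ˣ, β ^ (((t : ZMod q) * (x.2 - b)).val)) := by
          refine Finset.sum_congr rfl fun x _ => ?_
          rw [col (x.1 - a), row (x.2 - b)]
          simp [sub_eq_zero]
      _ = ∑ s : (ZMod p)ˣ, ∑ t : (ZMod q)ˣ, ∑ x ∈ T,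
            α ^ (((s : ZMod p) * (x.1 - a)).val) * β ^ (((t : ZMod q) * (x.2 - b)).val) := by
          simp_rw [Finset.sum_mul_sum]
          rw [Finset.sum_comm]
          exact Finset.sum_congr rfl fun s _ => Finset.sum_comm
      _ = 0 := by
          refine Finset.sum_eq_zero fun s _ => Finset.sum_eq_zero fun t _ => ?_
          have hx : ∀ x : ZMod p × ZMod q,
              α ^ (((s : ZMod p) * (x.1 - a)).val) * β ^ (((t : ZMod q) * (x.2 - b)).val)
              = (α ^ (((s : ZMod p) * (-a)).val) * β ^ (((t : ZMod q) * (-b)).val)) *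
                (α ^ (((s : ZMod p) * x.1).val) * β ^ (((t : ZMod q) * x.2).val)) := by
            intro x
            rw [show (s : ZMod p) * (x.1 - a) = (s : ZMod p) * x.1 + (s : ZMod p) * (-a) by ring,
              show (t : ZMod q) * (x.2 - b) = (t : ZMod q) * x.2 + (t : ZMod q) * (-b) by ring,
              char_add hα1, char_add hβ1]
            ring
          rw [Finset.sum_congr rfl fun x _ => hx x, ← Finset.mul_sum, Rel s t, mul_zero]
  have hpC : (p : ℂ) ≠ 0 := Nat.cast_ne_zero.mpr hp.pos.ne'
  have hqC : (q : ℂ) ≠ 0 := Nat.cast_ne_zero.mpr hq.pos.ne'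
  -- counting form of the identity
  have KeyC : ∀ (a : ZMod p) (b : ZMod q),
      (p : ℂ) * q * (if (a, b) ∈ T then (1:ℂ) else 0)
        - p * (T.filter (fun x => x.1 = a)).card
        - q * (T.filter (fun x => x.2 = b)).card + T.card = 0 := by
    intro a b
    have hpoint : ∀ x : ZMod p × ZMod q,
        (if x.1 = a then (p : ℂ) - 1 else -1) * (if x.2 = b then (q : ℂ) - 1 else -1)
        = (p : ℂ) * q * (if x = (a, b) then (1:ℂ) else 0)
          - p * (if x.1 = a then (1:ℂ) else 0)
          - q * (if x.2 = b then (1:ℂ) else 0) + 1 := by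
      intro x
      by_cases h1 : x.1 = a <;> by_cases h2 : x.2 = b <;>
        simp [h1, h2, Prod.ext_iff] <;> ring
    have hs1 : ∑ x ∈ T, (if x = (a, b) then (1:ℂ) else 0) = if (a, b) ∈ T then (1:ℂ) else 0 :=
      Finset.sum_ite_eq' T (a, b) (fun _ => (1:ℂ))
    have hs2 : ∑ x ∈ T, (if x.1 = a then (1:ℂ) else 0)
        = ((T.filter (fun x => x.1 = a)).card : ℂ) := by
      rw [Finset.sum_boole]
    have hs3 : ∑ x ∈ T, (if x.2 = b then (1:ℂ) else 0)
        = ((T.filter (fun x => x.2 = b)).card : ℂ) := by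
      rw [Finset.sum_boole]
    have h0 := Key a b
    rw [Finset.sum_congr rfl (fun x _ => hpoint x)] at h0
    rw [Finset.sum_add_distrib, Finset.sum_sub_distrib, Finset.sum_sub_distrib,
      ← Finset.mul_sum, ← Finset.mul_sum, ← Finset.mul_sum, hs1, hs2, hs3,
      Finset.sum_const, nsmul_eq_mul, mul_one] at h0
    linear_combination h0
  -- row/column decomposition
  set r : ZMod p → ℂ := fun a => (q : ℂ)⁻¹ * (T.filter (fun x => x.1 = a)).card with hrdef
  set s : ZMod q → ℂ := fun b =>
    (p : ℂ)⁻¹ * (T.filter (fun x => x.2 = b)).card - ((p : ℂ) * q)⁻¹ * T.card with hsdef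
  have hc : ∀ (a : ZMod p) (b : ZMod q),
      (if (a, b) ∈ T then (1:ℂ) else 0) = r a + s b := by
    intro a b
    have h0 := KeyC a b
    simp only [hrdef, hsdef]
    by_cases hm : (a, b) ∈ T <;> simp only [hm, if_true, if_false] at h0 ⊢ <;> field_simp <;>
      first
        | linear_combination h0
        | linear_combination -h0
        | linear_combination (p : ℂ) * q * h0
        | linear_combination (-(p : ℂ)) * q * h0
  -- dichotomy
  have main : (∀ (i i' : ZMod p) (j : ZMod q), ((i, j) ∈ T ↔ (i', j) ∈ T)) ∨
      (∀ (i : ZMod p) (j j' : ZMod q), ((i, j) ∈ T ↔ (i, j') ∈ T)) := by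
    by_contra hcon
    push_neg at hcon
    obtain ⟨⟨i₀, i₁, j', hA⟩, i', j₀, j₁, hB⟩ := hcon
    have hr : r i₀ ≠ r i₁ := by
      intro hEq
      have hii : (if (i₀, j') ∈ T then (1:ℂ) else 0) = (if (i₁, j') ∈ T then (1:ℂ) else 0) := by
        rw [hc, hc, hEq]
      rcases hA with ⟨h1, h2⟩ | ⟨h1, h2⟩ <;> simp [h1, h2] at hii
    have hs : s j₀ ≠ s j₁ := by
      intro hEq
      have hjj : (if (i', j₀) ∈ T then (1:ℂ) else 0) = (if (i', j₁) ∈ T then (1:ℂ) else 0) := by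
        rw [hc, hc, hEq]
      rcases hB with ⟨h1, h2⟩ | ⟨h1, h2⟩ <;> simp [h1, h2] at hjj
    have mem01 : ∀ (a : ZMod p) (b : ZMod q), r a + s b = 0 ∨ r a + s b = 1 := by
      intro a b
      rw [← hc a b]
      split
      · right; rfl
      · left; rfl
    rcases mem01 i₀ j₀ with h00 | h00 <;> rcases mem01 i₀ j₁ with h01 | h01 <;>
      rcases mem01 i₁ j₀ with h10 | h10 <;> rcases mem01 i₁ j₁ with h11 | h11 <;>
      first
        | exact hr (by linear_combination h00 - h10)
        | exact hs (by linear_combination h00 - h01)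
        | exact hr (by linear_combination h01 - h11)
        | exact hs (by linear_combination h10 - h11)
        | exact absurd (show (2:ℂ) = 0 by linear_combination h00 + h11 - h01 - h10) (by norm_num)
        | exact absurd (show (2:ℂ) = 0 by linear_combination h01 + h10 - h00 - h11) (by norm_num)
  rcases main with cc | cc
  · left
    rw [← hcard]
    have hTeq : T = Finset.univ ×ˢ Finset.univ.filter (fun j => ((0 : ZMod p), j) ∈ T) := by
      ext x
      simp only [Finset.mem_product, Finset.mem_filter, Finset.mem_univ, true_and]
      rw [show x = (x.1, x.2) from rfl]
      exact cc x.1 0 x.2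
    rw [hTeq, Finset.card_product, Finset.card_univ, ZMod.card p]
    exact dvd_mul_right p _
  · right
    rw [← hcard]
    have hTeq : T = (Finset.univ.filter (fun i => (i, (0 : ZMod q)) ∈ T)) ×ˢ Finset.univ := by
      ext x
      simp only [Finset.mem_product, Finset.mem_filter, Finset.mem_univ, true_and, and_true]
      rw [show x = (x.1, x.2) from rfl]
      exact cc x.1 x.2 0
    rw [hTeq, Finset.card_product, Finset.card_univ, ZMod.card q]
    exact dvd_mul_left q _
end

section
/- Suppose there exists a (v,m,k,λ)-SEDF with v = pq (p, q distinct primes), k > 1, m > 2, p ∣ k, and km < v. Then k > p(v−1)/q, and consequently p/q ≤ 1/5 + 1/(5(v−1)). -/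
set_option linter.unusedSectionVars false
set_option maxHeartbeats 1000000

open Finset Complex


lemma key34 (n : ℕ) (hn : n = 3 ∨ n = 4) (a : Fin n → ℂ) (lam : ℝ) (hlam : 0 < lam)
    (h : ∀ j, a j * (starRingEnd ℂ) ((∑ i, a i) - a j) = -(lam : ℂ)) :
    ∑ i, a i = 0 := by
  by_contra hT
  set T := ∑ i, a i with hTdef
  have hnT : 0 < Complex.normSq T := Complex.normSq_pos.2 hT
  have hnT' : ((Complex.normSq T : ℝ) : ℂ) ≠ 0 := by
    exact_mod_cast Complex.ofReal_ne_zero.2 (ne_of_gt hnT)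
  obtain ⟨c, hcdef⟩ : ∃ c : Fin n → ℝ,
      ∀ j, c j = (Complex.normSq (a j) - lam) / Complex.normSq T :=
    ⟨_, fun _ => rfl⟩
  have hconjT : (starRingEnd ℂ) T ≠ 0 := fun hC =>
    hT (by simpa using congrArg (starRingEnd ℂ) hC)
  have hac : ∀ j, a j = (c j : ℂ) * T := by
    intro j
    have h1 : a j * (starRingEnd ℂ) T = ((Complex.normSq (a j) - lam : ℝ) : ℂ) := by
      have h0 := h j
      rw [map_sub, mul_sub, Complex.mul_conj] at h0
      push_cast
      linear_combination h0
    have h2 : (a j - (c j : ℂ) * T) * (starRingEnd ℂ) T = 0 := by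
      rw [sub_mul, h1, mul_assoc, Complex.mul_conj, hcdef j]
      push_cast
      field_simp
      ring
    rcases mul_eq_zero.1 h2 with h3 | h3
    · exact sub_eq_zero.mp h3
    · exact absurd h3 hconjT
  have hsum : (∑ j, c j) = 1 := by
    have hcast : ((∑ j, c j : ℝ) : ℂ) = ∑ j, (c j : ℂ) := by push_cast; rfl
    have h4 : ((∑ j, c j : ℝ) : ℂ) * T = 1 * T := by
      rw [one_mul, hcast, Finset.sum_mul]
      calc (∑ j, (c j : ℂ) * T) = ∑ j, a j := by simp_rw [← hac]
        _ = T := hTdef.symm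
    have := mul_right_cancel₀ hT h4
    exact_mod_cast this
  have hquad : ∀ j, (c j) ^ 2 - c j = lam / Complex.normSq T := by
    intro j
    have h0 := h j
    rw [hac j] at h0
    have he : T - (c j : ℂ) * T = ((1 - c j : ℝ) : ℂ) * T := by push_cast; ring
    rw [he, map_mul, Complex.conj_ofReal] at h0
    have h5 : (((c j * (1 - c j) * Complex.normSq T : ℝ)) : ℂ) = ((-lam : ℝ) : ℂ) := by
      push_cast at h0 ⊢
      rw [← Complex.mul_conj T]
      linear_combination h0
    have h6 : c j * (1 - c j) * Complex.normSq T = -lam := by exact_mod_cast h5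
    field_simp
    nlinarith [h6]
  rcases hn with rfl | rfl
  · have hmu : c 0 ^ 2 - c 0 > 0 := by rw [hquad 0]; exact div_pos hlam hnT
    have hroots : ∀ j, c j = c 0 ∨ c j = 1 - c 0 := by
      intro j
      have h7 : (c j - c 0) * (c j + c 0 - 1) = 0 := by
        have ha := hquad j; have hb := hquad 0; nlinarith [ha, hb]
      rcases mul_eq_zero.1 h7 with h9 | h9
      · left; linarith [sub_eq_zero.mp h9]
      · right; linarith
    rw [Fin.sum_univ_three] at hsum
    rcases hroots 1 with h1 | h1 <;> rcases hroots 2 with h2 | h2 <;> nlinarith [hmu, hsum]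
  · have hmu : c 0 ^ 2 - c 0 > 0 := by rw [hquad 0]; exact div_pos hlam hnT
    have hroots : ∀ j, c j = c 0 ∨ c j = 1 - c 0 := by
      intro j
      have h7 : (c j - c 0) * (c j + c 0 - 1) = 0 := by
        have ha := hquad j; have hb := hquad 0; nlinarith [ha, hb]
      rcases mul_eq_zero.1 h7 with h9 | h9
      · left; linarith [sub_eq_zero.mp h9]
      · right; linarith
    rw [Fin.sum_univ_four] at hsum
    rcases hroots 1 with h1 | h1 <;> rcases hroots 2 with h2 | h2 <;>
      rcases hroots 3 with h3 | h3 <;> nlinarith [hmu, hsum]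

variable {G : Type} [CommGroup G] [Fintype G] [DecidableEq G]

lemma filter_decomp {m : ℕ} (D : Fin m → Finset G) (j : Fin m) :
    (Finset.univ.filter (fun p : Fin m × G × G =>
      p.1 ≠ j ∧ p.2.1 ∈ D j ∧ p.2.2 ∈ D p.1))
      = (Finset.univ.erase j).biUnion (fun ℓ => {ℓ} ×ˢ (D j ×ˢ D ℓ)) := by
  ext ⟨ℓ, x, y⟩
  simp only [Finset.mem_filter, Finset.mem_univ, true_and, Finset.mem_biUnion,
    Finset.mem_erase, Finset.mem_product, Finset.mem_singleton]
  constructor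
  · rintro ⟨h1, h2, h3⟩; exact ⟨ℓ, ⟨h1, trivial⟩, rfl, h2, h3⟩
  · rintro ⟨a, ⟨ha, -⟩, rfl, h2, h3⟩; exact ⟨ha, h2, h3⟩

lemma pd {m : ℕ} (D : Fin m → Finset G) (j : Fin m) :
    (↑(Finset.univ.erase j) : Set (Fin m)).PairwiseDisjoint
      (fun ℓ => {ℓ} ×ˢ (D j ×ˢ D ℓ)) := by
  intro a _ b _ hab
  simp only [Finset.disjoint_left, Finset.mem_product, Finset.mem_singleton]
  rintro ⟨ℓ, x, y⟩ ⟨rfl, -⟩ ⟨rfl, -⟩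
  exact hab rfl

lemma sedf_master {v m k lam : ℕ} {D : Fin m → Finset G} (h : IsSEDF G v m k lam D)
    (ψ : AddChar (Additive G) ℂ) (j : Fin m) :
    (∑ x ∈ D j, ψ (Additive.ofMul x)) *
      (∑ ℓ ∈ Finset.univ.erase j, ∑ y ∈ D ℓ, ψ (- Additive.ofMul y))
    = ∑ g : G, (if g = 1 then 0 else (lam : ℂ)) * ψ (Additive.ofMul g) := by
  obtain ⟨hcard, hsize, hdisj, hcount⟩ := h
  have key : ∀ g : G, (if g = 1 then (0:ℂ) else (lam : ℂ))
      = ((Finset.univ.filter (fun p : Fin m × G × G =>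
          p.1 ≠ j ∧ p.2.1 ∈ D j ∧ p.2.2 ∈ D p.1 ∧ p.2.1 * p.2.2⁻¹ = g)).card : ℂ) := by
    intro g; rw [hcount j g]; split_ifs <;> simp
  calc (∑ x ∈ D j, ψ (Additive.ofMul x)) *
      (∑ ℓ ∈ Finset.univ.erase j, ∑ y ∈ D ℓ, ψ (- Additive.ofMul y))
      = ∑ ℓ ∈ Finset.univ.erase j, ∑ x ∈ D j, ∑ y ∈ D ℓ,
          ψ (Additive.ofMul x) * ψ (- Additive.ofMul y) := by
        rw [Finset.mul_sum]
        exact Finset.sum_congr rfl fun ℓ _ => by rw [Finset.sum_mul_sum]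
    _ = ∑ ℓ ∈ Finset.univ.erase j, ∑ x ∈ D j, ∑ y ∈ D ℓ,
          ψ (Additive.ofMul (x * y⁻¹)) := by
        refine Finset.sum_congr rfl fun ℓ _ => Finset.sum_congr rfl fun x _ =>
          Finset.sum_congr rfl fun y _ => ?_
        rw [ofMul_mul, ofMul_inv, AddChar.map_add_eq_mul]
    _ = ∑ ℓ ∈ Finset.univ.erase j, ∑ p ∈ {ℓ} ×ˢ (D j ×ˢ D ℓ),
          ψ (Additive.ofMul (p.2.1 * p.2.2⁻¹)) := by
        refine Finset.sum_congr rfl fun ℓ _ => ?_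
        rw [Finset.sum_product, Finset.sum_singleton, Finset.sum_product]
    _ = ∑ p ∈ (Finset.univ.erase j).biUnion (fun ℓ => {ℓ} ×ˢ (D j ×ˢ D ℓ)),
          ψ (Additive.ofMul (p.2.1 * p.2.2⁻¹)) := (Finset.sum_biUnion (pd D j)).symm
    _ = ∑ p ∈ Finset.univ.filter (fun p : Fin m × G × G =>
          p.1 ≠ j ∧ p.2.1 ∈ D j ∧ p.2.2 ∈ D p.1),
          ψ (Additive.ofMul (p.2.1 * p.2.2⁻¹)) := by rw [filter_decomp]
    _ = ∑ g : G, ∑ p ∈ (Finset.univ.filter (fun p : Fin m × G × G =>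
          p.1 ≠ j ∧ p.2.1 ∈ D j ∧ p.2.2 ∈ D p.1)).filter
          (fun p => p.2.1 * p.2.2⁻¹ = g), ψ (Additive.ofMul g) :=
        (Finset.sum_fiberwise' (κ := G)
          (Finset.univ.filter (fun p : Fin m × G × G =>
            p.1 ≠ j ∧ p.2.1 ∈ D j ∧ p.2.2 ∈ D p.1))
          (fun p => p.2.1 * p.2.2⁻¹) (fun g => ψ (Additive.ofMul g))).symm
    _ = ∑ g : G, (if g = 1 then 0 else (lam : ℂ)) * ψ (Additive.ofMul g) := by
        refine Finset.sum_congr rfl fun g _ => ?_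
        rw [Finset.sum_const, key g, Finset.filter_filter, nsmul_eq_mul]
        have hfe : (Finset.univ.filter (fun p : Fin m × G × G =>
            (p.1 ≠ j ∧ p.2.1 ∈ D j ∧ p.2.2 ∈ D p.1) ∧ p.2.1 * p.2.2⁻¹ = g))
            = Finset.univ.filter (fun p : Fin m × G × G =>
            p.1 ≠ j ∧ p.2.1 ∈ D j ∧ p.2.2 ∈ D p.1 ∧ p.2.1 * p.2.2⁻¹ = g) := by
          ext p; simp only [Finset.mem_filter]; tauto
        rw [hfe]

lemma sedf_count {v m k lam : ℕ} {D : Fin m → Finset G} (h : IsSEDF G v m k lam D)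
    (j : Fin m) : (m - 1) * (k * k) = (v - 1) * lam := by
  obtain ⟨hcard, hsize, hdisj, hcount⟩ := h
  have h1 : (Finset.univ.filter (fun p : Fin m × G × G =>
      p.1 ≠ j ∧ p.2.1 ∈ D j ∧ p.2.2 ∈ D p.1)).card = (m - 1) * (k * k) := by
    rw [filter_decomp]
    rw [Finset.card_biUnion (fun a ha b hb hab => pd D j (by simpa using ha) (by simpa using hb) hab)]
    have : ∀ ℓ ∈ Finset.univ.erase j, ({ℓ} ×ˢ (D j ×ˢ D ℓ)).card = k * k := by
      intro ℓ _
      rw [Finset.card_product, Finset.card_product, Finset.card_singleton, one_mul,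
        hsize j, hsize ℓ]
    rw [Finset.sum_congr rfl this, Finset.sum_const, smul_eq_mul,
      Finset.card_erase_of_mem (Finset.mem_univ j), Finset.card_univ, Fintype.card_fin]
  have h2 : (Finset.univ.filter (fun p : Fin m × G × G =>
      p.1 ≠ j ∧ p.2.1 ∈ D j ∧ p.2.2 ∈ D p.1)).card = (v - 1) * lam := by
    rw [Finset.card_eq_sum_card_fiberwise
      (f := fun p : Fin m × G × G => p.2.1 * p.2.2⁻¹) (t := Finset.univ)
      (fun p _ => Finset.mem_univ _)]
    have heach : ∀ g ∈ Finset.univ (α := G),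
        ((Finset.univ.filter (fun p : Fin m × G × G =>
          p.1 ≠ j ∧ p.2.1 ∈ D j ∧ p.2.2 ∈ D p.1)).filter
          (fun p => p.2.1 * p.2.2⁻¹ = g)).card = if g = 1 then 0 else lam := by
      intro g _
      rw [Finset.filter_filter, ← hcount j g]
      congr 1
      ext p
      simp only [Finset.mem_filter]
      tauto
    rw [Finset.sum_congr rfl heach, ← Finset.sum_erase_add _ _ (Finset.mem_univ (1 : G)),
      if_pos rfl, add_zero]
    have : ∀ g ∈ Finset.univ.erase (1 : G), (if g = 1 then 0 else lam) = lam := by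
      intro g hg
      rw [if_neg (Finset.mem_erase.1 hg).1]
    rw [Finset.sum_congr rfl this, Finset.sum_const, smul_eq_mul,
      Finset.card_erase_of_mem (Finset.mem_univ _), Finset.card_univ, hcard]
  omega

lemma sedf_lam_pos {v m k lam : ℕ} {D : Fin m → Finset G} (h : IsSEDF G v m k lam D)
    (hk : 0 < k) (hm : 1 < m) : 0 < lam := by
  obtain ⟨hcard, hsize, hdisj, hcount⟩ := h
  set j0 : Fin m := ⟨0, by omega⟩
  set j1 : Fin m := ⟨1, by omega⟩
  have hne : j1 ≠ j0 := by simp [j0, j1, Fin.ext_iff]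
  obtain ⟨x, hx⟩ := Finset.card_pos.1 (by rw [hsize j0]; exact hk)
  obtain ⟨y, hy⟩ := Finset.card_pos.1 (by rw [hsize j1]; exact hk)
  have hg : x * y⁻¹ ≠ 1 := by
    intro h1
    have hxy : x = y := by
      have := mul_inv_eq_one.1 h1
      exact this
    exact Finset.disjoint_left.1 (hdisj j0 j1 (Ne.symm hne)) hx (hxy ▸ hy)
  have := hcount j0 (x * y⁻¹)
  rw [if_neg hg] at this
  have hmem : (j1, x, y) ∈ Finset.univ.filter (fun p : Fin m × G × G =>
      p.1 ≠ j0 ∧ p.2.1 ∈ D j0 ∧ p.2.2 ∈ D p.1 ∧ p.2.1 * p.2.2⁻¹ = x * y⁻¹) := by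
    simp only [Finset.mem_filter, Finset.mem_univ, true_and]
    exact ⟨hne, hx, hy, trivial⟩
  have := Finset.card_pos.2 ⟨_, hmem⟩
  omega

lemma sedf_T_eq_zero {v m k lam : ℕ} {D : Fin m → Finset G} (h : IsSEDF G v m k lam D)
    (hlam : 0 < lam) (hm : m = 3 ∨ m = 4)
    (ψ : AddChar (Additive G) ℂ) (hψ : ψ ≠ 0) :
    ∑ j, ∑ x ∈ D j, ψ (Additive.ofMul x) = 0 := by
  classical
  set a : Fin m → ℂ := fun j => ∑ x ∈ D j, ψ (Additive.ofMul x) with ha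
  have hGsum : ∑ g : G, ψ (Additive.ofMul g) = 0 := by
    have : ∑ g : G, ψ (Additive.ofMul g) = ∑ b : Additive G, ψ b :=
      Fintype.sum_equiv Additive.ofMul _ _ fun _ => rfl
    rw [this, AddChar.sum_eq_ite, if_neg hψ]
  refine key34 m hm a lam (by exact_mod_cast hlam) (fun j => ?_)
  have hmid : (∑ ℓ ∈ Finset.univ.erase j, ∑ y ∈ D ℓ, ψ (- Additive.ofMul y))
      = (starRingEnd ℂ) ((∑ i, a i) - a j) := by
    have h1 : ∀ ℓ, (∑ y ∈ D ℓ, ψ (- Additive.ofMul y)) = (starRingEnd ℂ) (a ℓ) := by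
      intro ℓ
      rw [map_sum]
      exact Finset.sum_congr rfl fun y _ => AddChar.map_neg_eq_conj ψ _
    rw [Finset.sum_congr rfl fun ℓ _ => h1 ℓ, ← map_sum,
      Finset.sum_erase_eq_sub (Finset.mem_univ j)]
  have hrhs : (∑ g : G, (if g = 1 then 0 else (lam : ℂ)) * ψ (Additive.ofMul g))
      = -(lam : ℂ) := by
    rw [← Finset.sum_erase_add _ _ (Finset.mem_univ (1 : G)), if_pos rfl, zero_mul, add_zero]
    have : ∀ g ∈ Finset.univ.erase (1 : G),
        (if g = 1 then 0 else (lam : ℂ)) * ψ (Additive.ofMul g)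
        = (lam : ℂ) * ψ (Additive.ofMul g) := by
      intro g hg
      rw [if_neg (Finset.mem_erase.1 hg).1]
    rw [Finset.sum_congr rfl this, ← Finset.mul_sum,
      Finset.sum_erase_eq_sub (Finset.mem_univ (1 : G)), hGsum]
    have : ψ (Additive.ofMul (1 : G)) = 1 := by
      rw [ofMul_one, AddChar.map_zero_eq_one]
    rw [this]
    ring
  have := sedf_master h ψ j
  rw [hmid, hrhs] at this
  exact this

lemma sedf_no34 {v m k lam : ℕ} {D : Fin m → Finset G} (h : IsSEDF G v m k lam D)
    (hk : 0 < k) (hm : m = 3 ∨ m = 4) (hkm : k * m < v) : False := by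
  classical
  have hm1 : 1 < m := by omega
  have hlam := sedf_lam_pos h hk hm1
  have hT0 := sedf_T_eq_zero h hlam hm
  obtain ⟨hcard, hsize, hdisj, hcount⟩ := h
  have hbcard : (Finset.univ.biUnion D).card < Fintype.card G := by
    calc (Finset.univ.biUnion D).card ≤ ∑ j, (D j).card := Finset.card_biUnion_le
      _ = m * k := by
        rw [Finset.sum_congr rfl (fun j _ => hsize j), Finset.sum_const, smul_eq_mul,
          Finset.card_univ, Fintype.card_fin]
      _ < Fintype.card G := by rw [hcard, mul_comm]; exact hkm
  have hne : Finset.univ.biUnion D ≠ Finset.univ := by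
    intro he
    rw [he, Finset.card_univ] at hbcard
    omega
  obtain ⟨g, -, hg⟩ := Finset.exists_of_ssubset
    (ssubset_of_subset_of_ne (Finset.subset_univ _) hne)
  have hg' : ∀ j, g ∉ D j := fun j hgj => hg (Finset.mem_biUnion.2 ⟨j, Finset.mem_univ j, hgj⟩)
  have hA : ∑ ψ : AddChar (Additive G) ℂ,
      (∑ j, ∑ x ∈ D j, ψ (Additive.ofMul x)) * ψ (- Additive.ofMul g)
      = (m * k : ℂ) := by
    rw [Finset.sum_eq_single (0 : AddChar (Additive G) ℂ)
      (fun ψ _ hψ => by rw [hT0 ψ hψ, zero_mul])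
      (fun habs => absurd (Finset.mem_univ _) habs)]
    have h1 : ∀ j : Fin m, (∑ x ∈ D j, (1 : ℂ)) = (k : ℂ) := fun j => by
      rw [Finset.sum_const, hsize j, nsmul_eq_mul, mul_one]
    simp only [AddChar.zero_apply, mul_one]
    rw [Finset.sum_congr rfl fun j _ => h1 j, Finset.sum_const, Finset.card_univ,
      Fintype.card_fin, nsmul_eq_mul]
  have hB : ∑ ψ : AddChar (Additive G) ℂ,
      (∑ j, ∑ x ∈ D j, ψ (Additive.ofMul x)) * ψ (- Additive.ofMul g)
      = 0 := by
    have step : ∀ ψ : AddChar (Additive G) ℂ,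
        (∑ j, ∑ x ∈ D j, ψ (Additive.ofMul x)) * ψ (- Additive.ofMul g)
        = ∑ j, ∑ x ∈ D j, ψ (Additive.ofMul x - Additive.ofMul g) := by
      intro ψ
      rw [Finset.sum_mul]
      refine Finset.sum_congr rfl fun j _ => ?_
      rw [Finset.sum_mul]
      refine Finset.sum_congr rfl fun x _ => ?_
      rw [← AddChar.map_add_eq_mul, ← sub_eq_add_neg]
    rw [Finset.sum_congr rfl fun ψ _ => step ψ]
    rw [Finset.sum_comm]
    refine Finset.sum_eq_zero fun j _ => ?_
    rw [Finset.sum_comm]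
    refine Finset.sum_eq_zero fun x hx => ?_
    rw [AddChar.sum_apply_eq_ite, if_neg]
    intro habs
    have : (Additive.ofMul x) = Additive.ofMul g := by
      have := sub_eq_zero.1 habs
      exact this
    exact hg' j (Additive.ofMul.injective this ▸ hx)
  rw [hA] at hB
  have : m * k = 0 := by exact_mod_cast hB
  rcases Nat.mul_eq_zero.1 this with h0 | h0 <;> omega


theorem stmt_18 (G : Type) [CommGroup G] [Fintype G] [DecidableEq G]
    (v m k lam p q : ℕ) (hp : p.Prime) (hq : q.Prime) (hpq : p ≠ q)
    (hv : v = p * q) (hk : 1 < k) (hm : 2 < m) (hdvd : p ∣ k) (hkm : k * m < v)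
    (D : Fin m → Finset G) (h : IsSEDF G v m k lam D) :
    (k : ℝ) > p * (v - 1) / q ∧
    (p : ℝ) / q ≤ 1 / 5 + 1 / (5 * (v - 1)) := by
  have hppos : 0 < p := hp.pos
  have hqpos : 0 < q := hq.pos
  have hp2 : 2 ≤ p := hp.two_le
  have hq2 : 2 ≤ q := hq.two_le
  have hv6 : 6 ≤ v := by
    have h3 : 3 ≤ p ∨ 3 ≤ q := by omega
    rcases h3 with h3 | h3
    · calc 6 = 3 * 2 := rfl
        _ ≤ p * q := Nat.mul_le_mul h3 hq2
        _ = v := hv.symm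
    · calc 6 = 2 * 3 := rfl
        _ ≤ p * q := Nat.mul_le_mul hp2 h3
        _ = v := hv.symm
  have hm5 : 4 < m := by
    by_contra hle
    exact sedf_no34 h (by omega) (by omega) hkm
  have hlam : 0 < lam := sedf_lam_pos h (by omega) (by omega)
  have hcnt : (m - 1) * (k * k) = (v - 1) * lam := sedf_count h ⟨0, by omega⟩
  obtain ⟨s, hs⟩ := hdvd
  have hspos : 0 < s := by
    rcases Nat.eq_zero_or_pos s with h0 | h0
    · subst h0; omega
    · exact h0
  have hpv : ¬ p ∣ (v - 1) := by
    intro hdv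
    have h1 : p ∣ v := hv ▸ Dvd.intro q rfl
    have h2 : p ∣ v - (v - 1) := Nat.dvd_sub h1 hdv
    have h3 : v - (v - 1) = 1 := by omega
    rw [h3] at h2
    have := Nat.le_of_dvd one_pos h2
    omega
  have hp2lam : p ^ 2 ∣ lam := by
    have h1 : p ^ 2 ∣ (v - 1) * lam := by
      rw [← hcnt]
      exact ⟨(m - 1) * (s * s), by rw [hs]; ring⟩
    exact (Nat.Coprime.pow_left 2 ((Nat.Prime.coprime_iff_not_dvd hp).2 hpv)).dvd_of_dvd_mul_left
      h1
  obtain ⟨t, ht⟩ := hp2lam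
  have htpos : 0 < t := by
    rcases Nat.eq_zero_or_pos t with h0 | h0
    · subst h0; omega
    · exact h0
  have hcore : (m - 1) * (s * s) = (v - 1) * t := by
    have hEq : p ^ 2 * ((m - 1) * (s * s)) = p ^ 2 * ((v - 1) * t) := by
      calc p ^ 2 * ((m - 1) * (s * s)) = (m - 1) * (k * k) := by rw [hs]; ring
        _ = (v - 1) * lam := hcnt
        _ = p ^ 2 * ((v - 1) * t) := by rw [ht]; ring
    exact Nat.eq_of_mul_eq_mul_left (by positivity) hEq
  have hsm : s * m < q := by
    have h1 : p * (s * m) < p * q := by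
      calc p * (s * m) = k * m := by rw [hs]; ring
        _ < v := hkm
        _ = p * q := hv
    exact Nat.lt_of_mul_lt_mul_left h1
  have hsq : v - 1 < s * q := by
    have h9 : s * (m - 1) < q := by
      have : s * (m - 1) < s * m := mul_lt_mul_of_pos_left (by omega) hspos
      omega
    calc v - 1 ≤ (v - 1) * t := Nat.le_mul_of_pos_right _ htpos
      _ = (m - 1) * (s * s) := hcore.symm
      _ = s * (s * (m - 1)) := by ring
      _ < s * q := mul_lt_mul_of_pos_left h9 hspos
  have hkq : p * (v - 1) < k * q := by
    calc p * (v - 1) < p * (s * q) := mul_lt_mul_of_pos_left hsq hppos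
      _ = k * q := by rw [hs]; ring
  have h5k : 5 * k < v := by
    have : k * 5 ≤ k * m := Nat.mul_le_mul_left k (by omega)
    omega
  have hcastv : ((v - 1 : ℕ) : ℝ) = (v : ℝ) - 1 := by
    rw [Nat.cast_sub (by omega)]; norm_num
  have hq0' : (0 : ℝ) < q := by exact_mod_cast hqpos
  have hv1' : (0 : ℝ) < (v : ℝ) - 1 := by
    have : (6 : ℝ) ≤ v := by exact_mod_cast hv6
    linarith
  constructor
  · rw [gt_iff_lt, div_lt_iff₀ hq0']
    have : ((p * (v - 1) : ℕ) : ℝ) < ((k * q : ℕ) : ℝ) := by exact_mod_cast hkq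
    push_cast [hcastv] at this ⊢
    linarith
  · have hnat : 5 * (p * (v - 1)) < v * q := by
      calc 5 * (p * (v - 1)) < 5 * (k * q) := mul_lt_mul_of_pos_left hkq (by norm_num)
        _ = (5 * k) * q := by ring
        _ ≤ v * q := Nat.mul_le_mul_right q (le_of_lt h5k)
    have hsplit : (1 : ℝ) / 5 + 1 / (5 * ((v : ℝ) - 1)) = v / (5 * ((v : ℝ) - 1)) := by
      field_simp
      ring
    rw [hsplit, div_le_div_iff₀ hq0' (by positivity)]
    have : ((5 * (p * (v - 1)) : ℕ) : ℝ) ≤ ((v * q : ℕ) : ℝ) := by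
      exact_mod_cast le_of_lt hnat
    push_cast [hcastv] at this ⊢
    linarith
end
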